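/- Let G be a finite group of order n, and let ρ_1, …, ρ_r be pairwise non-isomorphic irreducible unitary representations of G of degrees d_1, …, d_r with d_1² + ⋯ + d_r² = n (a complete set of irreducible representations). Let α : G → ℂ be a class function and let A be the adjacency matrix of the Cayley color graph Γ(G; α), i.e. A(x, y) = α(y · x⁻¹). Then the characteristic polynomial of A equals ∏_{k=1}^{r} (X − λ_k)^{d_k²}, where λ_k = (1/d_k) · Σ_{g ∈ G} α(g) χ_k(g) and χ_k is the character of ρ_k. -/

import Mathlib

open Polynomial Matrix

/-- A matrix representation (valued in unitary matrices) is irreducible if the corresponding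
module `ℂ^d` has no invariant subspace other than `⊥` and `⊤`. -/
def IsIrreducibleUnitaryRep {G : Type*} [Group G] {d : ℕ}
    (ρ : G →* Matrix.unitaryGroup (Fin d) ℂ) : Prop :=
  ∀ W : Submodule ℂ (Fin d → ℂ),
    (∀ g : G, ∀ v ∈ W, (ρ g : Matrix (Fin d) (Fin d) ℂ).mulVec v ∈ W) →
    W = ⊥ ∨ W = ⊤

/-- Two unitary matrix representations are isomorphic if there exists an invertible
intertwiner between them. -/
def UnitaryRepIso {G : Type*} [Group G] {d d' : ℕ}
    (ρ : G →* Matrix.unitaryGroup (Fin d) ℂ)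
    (ρ' : G →* Matrix.unitaryGroup (Fin d') ℂ) : Prop :=
  ∃ T : (Fin d' → ℂ) ≃ₗ[ℂ] (Fin d → ℂ),
    ∀ g : G, ∀ v : Fin d' → ℂ,
      (ρ g : Matrix (Fin d) (Fin d) ℂ).mulVec (T v) =
        T ((ρ' g : Matrix (Fin d') (Fin d') ℂ).mulVec v)

lemma unitary_star_coe {G : Type*} [Group G] {d : ℕ}
    (ρ : G →* Matrix.unitaryGroup (Fin d) ℂ) (g : G) :
    star (ρ g : Matrix (Fin d) (Fin d) ℂ) = ((ρ g⁻¹ : Matrix.unitaryGroup (Fin d) ℂ) : Matrix (Fin d) (Fin d) ℂ) := by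
  rw [map_inv]
  rfl

lemma schur_ne {G : Type*} [Group G] {d d' : ℕ}
    (ρ : G →* Matrix.unitaryGroup (Fin d) ℂ) (ρ' : G →* Matrix.unitaryGroup (Fin d') ℂ)
    (hirr : IsIrreducibleUnitaryRep ρ) (hirr' : IsIrreducibleUnitaryRep ρ')
    (hni : ¬ UnitaryRepIso ρ ρ')
    (T : Matrix (Fin d) (Fin d') ℂ)
    (hT : ∀ g : G, (ρ g : Matrix (Fin d) (Fin d) ℂ) * T
        = T * (ρ' g : Matrix (Fin d') (Fin d') ℂ)) :
    T = 0 := by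
  by_contra hT0
  have hfne : T.mulVecLin ≠ 0 := by
    intro h
    apply hT0
    have := Matrix.toLin'.injective (by rw [Matrix.toLin'_apply', h, map_zero] : Matrix.toLin' T = Matrix.toLin' 0)
    exact this
  have hcomm : ∀ (g : G) (v : Fin d' → ℂ),
      T.mulVec ((ρ' g : Matrix (Fin d') (Fin d') ℂ).mulVec v)
        = (ρ g : Matrix (Fin d) (Fin d) ℂ).mulVec (T.mulVec v) := by
    intro g v
    rw [Matrix.mulVec_mulVec, Matrix.mulVec_mulVec, hT]
  have hker : LinearMap.ker T.mulVecLin = ⊥ := by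
    rcases hirr' (LinearMap.ker T.mulVecLin) (fun g v hv => by
      simp only [LinearMap.mem_ker, Matrix.mulVecLin_apply] at *
      rw [hcomm, hv, Matrix.mulVec_zero]) with h | h
    · exact h
    · exact absurd (LinearMap.ker_eq_top.mp h) hfne
  have hrange : LinearMap.range T.mulVecLin = ⊤ := by
    rcases hirr (LinearMap.range T.mulVecLin) (fun g v hv => by
      obtain ⟨u, rfl⟩ := hv
      exact ⟨(ρ' g : Matrix (Fin d') (Fin d') ℂ).mulVec u, (hcomm g u)⟩) with h | h
    · exact absurd (LinearMap.range_eq_bot.mp h) hfne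
    · exact h
  exact hni ⟨LinearEquiv.ofBijective T.mulVecLin
      ⟨LinearMap.ker_eq_bot.mp hker, LinearMap.range_eq_top.mp hrange⟩,
    fun g v => (hcomm g v).symm⟩

lemma schur_scalar {G : Type*} [Group G] {d : ℕ} (hd : 0 < d)
    (ρ : G →* Matrix.unitaryGroup (Fin d) ℂ) (hirr : IsIrreducibleUnitaryRep ρ)
    (T : Matrix (Fin d) (Fin d) ℂ)
    (hT : ∀ g : G, (ρ g : Matrix (Fin d) (Fin d) ℂ) * T
        = T * (ρ g : Matrix (Fin d) (Fin d) ℂ)) :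
    T = (Matrix.trace T / d) • (1 : Matrix (Fin d) (Fin d) ℂ) := by
  have : NeZero d := ⟨hd.ne'⟩
  have : Nontrivial (Fin d → ℂ) := ⟨0, fun _ => 1, by
    intro h; simpa using congrFun h ⟨0, hd⟩⟩
  obtain ⟨c, hc⟩ := Module.End.exists_eigenvalue T.mulVecLin
  obtain ⟨v, hv⟩ := hc.exists_hasEigenvector
  set S := T - c • (1 : Matrix (Fin d) (Fin d) ℂ) with hSdef
  have hS : ∀ g : G, (ρ g : Matrix (Fin d) (Fin d) ℂ) * S
      = S * (ρ g : Matrix (Fin d) (Fin d) ℂ) := by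
    intro g
    simp only [hSdef, Matrix.mul_sub, Matrix.sub_mul, hT g, Matrix.mul_smul, Matrix.smul_mul,
      Matrix.mul_one, Matrix.one_mul]
  have hvS : S.mulVec v = 0 := by
    have h1 : T.mulVecLin v = c • v := hv.apply_eq_smul
    simp only [Matrix.mulVecLin_apply] at h1
    simp [hSdef, Matrix.sub_mulVec, h1, Matrix.smul_mulVec, Matrix.one_mulVec,
      smul_mulVec]
  have hSker : LinearMap.ker S.mulVecLin = ⊤ := by
    rcases hirr (LinearMap.ker S.mulVecLin) (fun g w hw => by
      simp only [LinearMap.mem_ker, Matrix.mulVecLin_apply] at *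
      rw [Matrix.mulVec_mulVec, ← hS, ← Matrix.mulVec_mulVec, hw, Matrix.mulVec_zero]) with h | h
    · exact absurd (h ▸ (LinearMap.mem_ker.mpr hvS : v ∈ LinearMap.ker S.mulVecLin)) (by
        simpa using hv.2)
    · exact h
  have hS0 : S = 0 := by
    have : S.mulVecLin = 0 := LinearMap.ker_eq_top.mp hSker
    have := Matrix.toLin'.injective (by rw [Matrix.toLin'_apply', this, map_zero] : Matrix.toLin' S = Matrix.toLin' 0)
    exact this
  have hTc : T = c • (1 : Matrix (Fin d) (Fin d) ℂ) := by
    have := sub_eq_zero.mp hS0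
    exact this
  rw [hTc]
  congr 1
  rw [Matrix.trace_smul, Matrix.trace_one, Fintype.card_fin, smul_eq_mul]
  field_simp [(Nat.cast_ne_zero.mpr hd.ne' : (d : ℂ) ≠ 0)]

lemma charpoly_diag {n : Type*} [DecidableEq n] [Fintype n] (f : n → ℂ) :
    (Matrix.diagonal f).charpoly = ∏ i : n, (X - C (f i)) := by
  have h : charmatrix (Matrix.diagonal f) = Matrix.diagonal (fun i => X - C (f i)) := by
    ext i j
    by_cases hij : i = j
    · subst hij; simp
    · simp [hij, Matrix.diagonal_apply_ne _ hij]
  rw [Matrix.charpoly, h, Matrix.det_diagonal]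

lemma charpoly_conj {n : Type*} [DecidableEq n] [Fintype n] (P N : Matrix n n ℂ)
    (hP : IsUnit P.det) : (P * N * P⁻¹).charpoly = N.charpoly := by
  have hPP : P * P⁻¹ = 1 := Matrix.mul_nonsing_inv P hP
  have hmap : ∀ M M' : Matrix n n ℂ, (M * M').map ⇑(C : ℂ →+* ℂ[X])
      = M.map ⇑(C : ℂ →+* ℂ[X]) * M'.map ⇑(C : ℂ →+* ℂ[X]) := fun M M' =>
    Matrix.map_mul
  have key : charmatrix (P * N * P⁻¹)
      = P.map ⇑(C : ℂ →+* ℂ[X]) * charmatrix N * (P⁻¹).map ⇑(C : ℂ →+* ℂ[X]) := by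
    simp only [charmatrix, RingHom.mapMatrix_apply, Matrix.mul_sub, Matrix.sub_mul]
    congr 1
    · have hc : P.map ⇑(C : ℂ →+* ℂ[X]) * Matrix.scalar n (X : ℂ[X])
          = Matrix.scalar n (X : ℂ[X]) * P.map ⇑(C : ℂ →+* ℂ[X]) :=
        ((Matrix.scalar_commute (X : ℂ[X]) (fun r => Commute.all _ _)
          (P.map ⇑(C : ℂ →+* ℂ[X])))).eq.symm
      rw [hc, Matrix.mul_assoc, ← hmap, hPP]
      have : ((1 : Matrix n n ℂ)).map ⇑(C : ℂ →+* ℂ[X]) = 1 :=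
        Matrix.map_one _ (map_zero C) (map_one C)
      rw [this, Matrix.mul_one]
    · rw [← hmap, ← hmap]
  rw [Matrix.charpoly, Matrix.charpoly, key, Matrix.det_mul, Matrix.det_mul]
  have h1 : (P.map ⇑(C : ℂ →+* ℂ[X])).det * ((P⁻¹).map ⇑(C : ℂ →+* ℂ[X])).det = 1 := by
    rw [← Matrix.det_mul, ← hmap, hPP, Matrix.map_one _ (map_zero C) (map_one C),
      Matrix.det_one]
  calc (P.map ⇑(C : ℂ →+* ℂ[X])).det * (charmatrix N).det * ((P⁻¹).map ⇑(C : ℂ →+* ℂ[X])).det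
      = (P.map ⇑(C : ℂ →+* ℂ[X])).det * ((P⁻¹).map ⇑(C : ℂ →+* ℂ[X])).det
        * (charmatrix N).det := by ring
    _ = (charmatrix N).det := by rw [h1, one_mul]

lemma entry_std {a b : ℕ} (M : Matrix (Fin a) (Fin a) ℂ) (N : Matrix (Fin b) (Fin b) ℂ)
    (i j : Fin a) (i' j' : Fin b) :
    (M * Matrix.single i i' (1 : ℂ) * N) j j' = M j i * N i' j' := by
  rw [Matrix.mul_assoc, Matrix.mul_apply]
  have : ∀ x : Fin a, M j x * (Matrix.single i i' (1 : ℂ) * N) x j'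
      = if x = i then M j i * N i' j' else 0 := by
    intro x
    rw [Matrix.mul_apply]
    by_cases hx : x = i
    · subst hx
      rw [Finset.sum_eq_single i']
      · simp [Matrix.single_apply_same]
      · intro c _ hc
        rw [Matrix.single_apply_of_col_ne _ _ (Ne.symm hc)]
        ring
      · simp
    · rw [Finset.sum_eq_zero, mul_zero, if_neg hx]
      intro c _
      rw [Matrix.single_apply_of_row_ne (Ne.symm hx)]
      ring
  rw [Finset.sum_congr rfl (fun x _ => this x), Finset.sum_ite_eq' Finset.univ i]
  simp

section TmLemmas
variable {G : Type*} [Group G] [Fintype G]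

lemma coe_rho_mul {dk : ℕ} (ρ : G →* Matrix.unitaryGroup (Fin dk) ℂ) (a b : G) :
    ((ρ (a * b) : Matrix.unitaryGroup (Fin dk) ℂ) : Matrix (Fin dk) (Fin dk) ℂ)
      = ((ρ a : Matrix.unitaryGroup (Fin dk) ℂ) : Matrix (Fin dk) (Fin dk) ℂ)
        * ((ρ b : Matrix.unitaryGroup (Fin dk) ℂ) : Matrix (Fin dk) (Fin dk) ℂ) := by
  rw [_root_.map_mul]; rfl

lemma coe_rho_one {dk : ℕ} (ρ : G →* Matrix.unitaryGroup (Fin dk) ℂ) :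
    ((ρ 1 : Matrix.unitaryGroup (Fin dk) ℂ) : Matrix (Fin dk) (Fin dk) ℂ) = 1 := by
  rw [_root_.map_one]; rfl

lemma Tm_intertwine {dk dk' : ℕ} (ρ : G →* Matrix.unitaryGroup (Fin dk) ℂ)
    (ρ' : G →* Matrix.unitaryGroup (Fin dk') ℂ) (E : Matrix (Fin dk) (Fin dk') ℂ) (h : G) :
    ((ρ h : Matrix.unitaryGroup (Fin dk) ℂ) : Matrix (Fin dk) (Fin dk) ℂ)
      * (∑ x : G, ((ρ x⁻¹ : Matrix.unitaryGroup (Fin dk) ℂ) : Matrix (Fin dk) (Fin dk) ℂ)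
          * E * ((ρ' x : Matrix.unitaryGroup (Fin dk') ℂ) : Matrix (Fin dk') (Fin dk') ℂ))
    = (∑ x : G, ((ρ x⁻¹ : Matrix.unitaryGroup (Fin dk) ℂ) : Matrix (Fin dk) (Fin dk) ℂ)
          * E * ((ρ' x : Matrix.unitaryGroup (Fin dk') ℂ) : Matrix (Fin dk') (Fin dk') ℂ))
      * ((ρ' h : Matrix.unitaryGroup (Fin dk') ℂ) : Matrix (Fin dk') (Fin dk') ℂ) := by
  rw [Matrix.mul_sum, Matrix.sum_mul]
  refine Fintype.sum_equiv (Equiv.mulRight h⁻¹) _ _ ?_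
  intro x
  have hc : (Equiv.mulRight h⁻¹) x = x * h⁻¹ := rfl
  rw [hc, ← Matrix.mul_assoc, ← Matrix.mul_assoc, ← coe_rho_mul, Matrix.mul_assoc,
    Matrix.mul_assoc, ← coe_rho_mul]
  have e1 : h * x⁻¹ = (x * h⁻¹)⁻¹ := by group
  have e2 : x * h⁻¹ * h = x := by group
  rw [e1, e2, Matrix.mul_assoc]

lemma Tm_same {dk : ℕ} (hk : 0 < dk) (ρ : G →* Matrix.unitaryGroup (Fin dk) ℂ)
    (hirr : IsIrreducibleUnitaryRep ρ) (i i' : Fin dk) :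
    (∑ x : G, ((ρ x⁻¹ : Matrix.unitaryGroup (Fin dk) ℂ) : Matrix (Fin dk) (Fin dk) ℂ)
        * Matrix.single i i' (1 : ℂ)
        * ((ρ x : Matrix.unitaryGroup (Fin dk) ℂ) : Matrix (Fin dk) (Fin dk) ℂ))
    = ((if i = i' then (Fintype.card G : ℂ) else 0) / dk) • 1 := by
  have key := schur_scalar hk ρ hirr
    (∑ x : G, ((ρ x⁻¹ : Matrix.unitaryGroup (Fin dk) ℂ) : Matrix (Fin dk) (Fin dk) ℂ)
        * Matrix.single i i' (1 : ℂ)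
        * ((ρ x : Matrix.unitaryGroup (Fin dk) ℂ) : Matrix (Fin dk) (Fin dk) ℂ))
    (fun h => Tm_intertwine ρ ρ (Matrix.single i i' (1 : ℂ)) h)
  rw [key]
  congr 2
  rw [Matrix.trace_sum]
  have : ∀ x : G, Matrix.trace
      (((ρ x⁻¹ : Matrix.unitaryGroup (Fin dk) ℂ) : Matrix (Fin dk) (Fin dk) ℂ)
        * Matrix.single i i' (1 : ℂ)
        * ((ρ x : Matrix.unitaryGroup (Fin dk) ℂ) : Matrix (Fin dk) (Fin dk) ℂ))
      = if i = i' then 1 else 0 := by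
    intro x
    rw [Matrix.trace_mul_comm, ← Matrix.mul_assoc, ← coe_rho_mul, mul_inv_cancel,
      coe_rho_one, Matrix.one_mul]
    by_cases hii : i = i'
    · subst hii; simp [Matrix.trace_single_eq_same]
    · rw [Matrix.trace_single_eq_of_ne (h := hii), if_neg hii]
  rw [Finset.sum_congr rfl (fun x _ => this x)]
  simp [Finset.sum_const]

end TmLemmas

/-- For a class function `α` on a finite group `G` of order `n` and a complete set
`ρ_1, …, ρ_r` of pairwise non-isomorphic irreducible unitary representations of degrees
`d_1, …, d_r` (so `d_1² + ⋯ + d_r² = n`), the characteristic polynomial of the adjacency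
matrix `A(x,y) = α (y * x⁻¹)` of the Cayley color graph `Γ(G; α)` is
`∏_k (X - λ_k)^{d_k²}`, where `λ_k = (1/d_k) ∑_g α(g) χ_k(g)`. -/
theorem cayley_adj_charpoly_of_classFunction {G : Type*} [Group G] [Fintype G] [DecidableEq G]
    {r : ℕ} (d : Fin r → ℕ)
    (ρ : (k : Fin r) → G →* Matrix.unitaryGroup (Fin (d k)) ℂ)
    (hirr : ∀ k, IsIrreducibleUnitaryRep (ρ k))
    (hnoniso : ∀ k k' : Fin r, k ≠ k' → ¬ UnitaryRepIso (ρ k) (ρ k'))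
    (hcomplete : ∑ k : Fin r, (d k) ^ 2 = Fintype.card G)
    (α : G → ℂ) (hα : ∀ g g' : G, α (g * g' * g⁻¹) = α g') :
    (Matrix.of fun x y : G => α (y * x⁻¹)).charpoly =
      ∏ k : Fin r,
        (X - C ((1 / (d k : ℂ)) *
            ∑ g : G, α g * Matrix.trace (ρ k g : Matrix (Fin (d k)) (Fin (d k)) ℂ))) ^
          ((d k) ^ 2) := by
  classical
  have hcard : Fintype.card ((k : Fin r) × (Fin (d k) × Fin (d k))) = Fintype.card G := by
    simp only [Fintype.card_sigma, Fintype.card_prod, Fintype.card_fin, ← sq]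
    exact hcomplete
  let e : ((k : Fin r) × (Fin (d k) × Fin (d k))) ≃ G := Fintype.equivOfCardEq hcard
  set lam : Fin r → ℂ := fun k => (1 / (d k : ℂ)) *
      ∑ g : G, α g * Matrix.trace (ρ k g : Matrix (Fin (d k)) (Fin (d k)) ℂ) with hlam
  set A : Matrix G G ℂ := Matrix.of fun x y : G => α (y * x⁻¹) with hA
  set P : Matrix G G ℂ := Matrix.of fun x y =>
    (ρ (e.symm y).1 x : Matrix (Fin (d (e.symm y).1)) (Fin (d (e.symm y).1)) ℂ)
      (e.symm y).2.1 (e.symm y).2.2 with hPdef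
  set D : Matrix G G ℂ := Matrix.diagonal (fun y => lam (e.symm y).1) with hDdef
  -- the central element acts as the scalar `lam k`
  have hM : ∀ k : Fin r, 0 < d k →
      (∑ z : G, α z • (ρ k z : Matrix (Fin (d k)) (Fin (d k)) ℂ))
        = lam k • (1 : Matrix (Fin (d k)) (Fin (d k)) ℂ) := by
    intro k hk
    have hcomm : ∀ h : G, (ρ k h : Matrix (Fin (d k)) (Fin (d k)) ℂ)
          * (∑ z : G, α z • (ρ k z : Matrix (Fin (d k)) (Fin (d k)) ℂ))
        = (∑ z : G, α z • (ρ k z : Matrix (Fin (d k)) (Fin (d k)) ℂ))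
          * (ρ k h : Matrix (Fin (d k)) (Fin (d k)) ℂ) := by
      intro h
      rw [Matrix.mul_sum, Matrix.sum_mul]
      refine Fintype.sum_equiv ((Equiv.mulLeft h).trans (Equiv.mulRight h⁻¹)) _ _ ?_
      intro z
      have hc : ((Equiv.mulLeft h).trans (Equiv.mulRight h⁻¹)) z = h * z * h⁻¹ := rfl
      rw [hc, hα h z, Matrix.mul_smul, Matrix.smul_mul, ← coe_rho_mul, ← coe_rho_mul]
      congr 2
      group
    have key := schur_scalar hk (ρ k) (hirr k)
      (∑ z : G, α z • (ρ k z : Matrix (Fin (d k)) (Fin (d k)) ℂ)) hcomm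
    rw [key, hlam]
    congr 1
    rw [Matrix.trace_sum]
    simp only [Matrix.trace_smul, smul_eq_mul]
    field_simp
  -- A * P = P * D
  have hAP : A * P = P * D := by
    ext x y
    rw [hDdef, Matrix.mul_diagonal, Matrix.mul_apply]
    have hk : 0 < d (e.symm y).1 := (e.symm y).2.1.pos
    have hMk := hM (e.symm y).1 hk
    calc ∑ z : G, A x z * P z y
        = ∑ z : G, α (z * x⁻¹)
            * (ρ (e.symm y).1 z : Matrix (Fin (d (e.symm y).1)) (Fin (d (e.symm y).1)) ℂ)
              (e.symm y).2.1 (e.symm y).2.2 := rfl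
      _ = ∑ w : G, α w
            * (ρ (e.symm y).1 (w * x) : Matrix (Fin (d (e.symm y).1)) (Fin (d (e.symm y).1)) ℂ)
              (e.symm y).2.1 (e.symm y).2.2 := by
          refine (Fintype.sum_equiv (Equiv.mulRight x) _ _ ?_).symm
          intro w
          have hc : (Equiv.mulRight x) w = w * x := rfl
          rw [hc, mul_inv_cancel_right]
      _ = ((∑ w : G, α w • (ρ (e.symm y).1 w
              : Matrix (Fin (d (e.symm y).1)) (Fin (d (e.symm y).1)) ℂ))
            * (ρ (e.symm y).1 x : Matrix (Fin (d (e.symm y).1)) (Fin (d (e.symm y).1)) ℂ))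
              (e.symm y).2.1 (e.symm y).2.2 := by
          rw [Matrix.sum_mul, Matrix.sum_apply]
          refine Finset.sum_congr rfl fun w _ => ?_
          rw [coe_rho_mul, Matrix.smul_mul, Matrix.smul_apply, smul_eq_mul]
      _ = P x y * lam (e.symm y).1 := by
          rw [hMk, Matrix.smul_mul, Matrix.one_mul, Matrix.smul_apply, smul_eq_mul, mul_comm]
          rfl
  -- Gram matrix
  have hGram : Pᴴ * P = Matrix.diagonal
      (fun y => (Fintype.card G : ℂ) / (d (e.symm y).1 : ℂ)) := by
    ext y y'
    have hyy : (y = y') ↔ (e.symm y = e.symm y') :=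
      ⟨fun h => by rw [h], fun h => e.symm.injective h⟩
    rw [Matrix.mul_apply, Matrix.diagonal_apply]
    have hterm : ∀ x : G, (Pᴴ) y x * P x y'
        = ((ρ (e.symm y).1 x⁻¹ : Matrix (Fin (d (e.symm y).1)) (Fin (d (e.symm y).1)) ℂ)
            * Matrix.single (e.symm y).2.1 (e.symm y').2.1 (1 : ℂ)
            * (ρ (e.symm y').1 x : Matrix (Fin (d (e.symm y').1)) (Fin (d (e.symm y').1)) ℂ))
            (e.symm y).2.2 (e.symm y').2.2 := by
      intro x
      rw [entry_std, Matrix.conjTranspose_apply, hPdef, Matrix.of_apply, Matrix.of_apply,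
        ← unitary_star_coe, Matrix.star_apply]
    rw [Finset.sum_congr rfl fun x _ => hterm x, ← Matrix.sum_apply]
    obtain ⟨⟨k, i, j⟩, hσ⟩ : ∃ σ, σ = e.symm y := ⟨_, rfl⟩
    obtain ⟨⟨k', i', j'⟩, hσ'⟩ : ∃ σ, σ = e.symm y' := ⟨_, rfl⟩
    rw [← hσ, ← hσ'] at hyy ⊢
    by_cases hkk : k = k'
    · subst hkk
      rw [Tm_same i.pos (ρ k) (hirr k) i i', Matrix.smul_apply, Matrix.one_apply, smul_eq_mul]
      have hy2 : (y = y') ↔ (i = i' ∧ j = j') := by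
        rw [hyy]
        simp [Sigma.mk.inj_iff, Prod.ext_iff]
      by_cases hii : i = i'
      · by_cases hjj : j = j'
        · rw [if_pos hii, if_pos hjj, if_pos (hy2.mpr ⟨hii, hjj⟩), mul_one]
        · rw [if_neg hjj, if_neg (fun h => hjj (hy2.mp h).2), mul_zero]
      · rw [if_neg hii, if_neg (fun h => hii (hy2.mp h).1), zero_div, zero_mul]
    · have h0 := schur_ne (ρ k) (ρ k') (hirr k) (hirr k') (hnoniso k k' hkk)
        (∑ x : G, (ρ k x⁻¹ : Matrix (Fin (d k)) (Fin (d k)) ℂ)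
          * Matrix.single i i' (1 : ℂ)
          * (ρ k' x : Matrix (Fin (d k')) (Fin (d k')) ℂ))
        (fun h => Tm_intertwine (ρ k) (ρ k') (Matrix.single i i' (1 : ℂ)) h)
      rw [h0]
      have hne : y ≠ y' := fun h => hkk (congrArg (fun σ => σ.1) (hyy.mp h))
      rw [if_neg hne, Matrix.zero_apply]
  -- P is invertible
  have hNG : Nonempty G := ⟨1⟩
  have hPunit : IsUnit P.det := by
    rw [isUnit_iff_ne_zero]
    intro h0
    have hd0 : (Pᴴ * P).det = 0 := by rw [Matrix.det_mul, h0, mul_zero]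
    rw [hGram, Matrix.det_diagonal] at hd0
    refine absurd hd0 (Finset.prod_ne_zero_iff.mpr fun y _ => ?_)
    apply div_ne_zero
    · exact_mod_cast Fintype.card_ne_zero
    · exact_mod_cast (e.symm y).2.1.pos.ne'
  -- conclude
  have hAconj : A = P * D * P⁻¹ := by
    rw [← hAP, Matrix.mul_assoc, Matrix.mul_nonsing_inv P hPunit, Matrix.mul_one]
  rw [hAconj, charpoly_conj _ _ hPunit, hDdef, charpoly_diag]
  calc ∏ y : G, (X - C (lam (e.symm y).1))
      = ∏ σ : ((k : Fin r) × (Fin (d k) × Fin (d k))), (X - C (lam σ.1)) :=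
        (Fintype.prod_equiv e _ _ (fun σ => by rw [Equiv.symm_apply_apply])).symm
    _ = ∏ k : Fin r, ∏ p : Fin (d k) × Fin (d k), (X - C (lam k)) := by
        rw [← Finset.univ_sigma_univ, Finset.prod_sigma]
    _ = ∏ k : Fin r, (X - C (lam k)) ^ ((d k) ^ 2) := by
        refine Finset.prod_congr rfl fun k _ => ?_
        rw [Finset.prod_const, Finset.card_univ, Fintype.card_prod, Fintype.card_fin, ← sq]
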